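/- Assume 1 < α_min < 2, −2 < 2 − α_min − α_sess < −1 and α_sess < 2. Then c = ∫₀^∞ r(x) H̄_I(x) dx is finite, V(t) ~ 2ct as t → ∞, and for every t > 0 the difference V(Tt)/(T L_V(T) L_r(T)) − 2ct/(L_V(T) L_r(T)) tends to 0 as T → ∞ (so lim_{T→∞} V(Tt)/(T L_V(T) L_r(T)) = lim_{T→∞} 2ct/(L_V(T) L_r(T)) whenever the latter limit exists). -/

import Mathlib

open MeasureTheory Filter Set
open scoped ENNReal

/-- A measurable, positive function `L` on `(0,∞)` is slowly varying at infinity if for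
every `c > 0`, `L(cx)/L(x) → 1` as `x → ∞`. -/
def SlowlyVarying (L : ℝ → ℝ) : Prop :=
  Measurable L ∧ (∀ x > 0, 0 < L x) ∧
    ∀ c > 0, Tendsto (fun x => L (c * x) / L x) atTop (nhds 1)

lemma uct_aux (h : ℝ → ℝ) (hm : Measurable h)
    (hconv : ∀ s : ℝ, Tendsto (fun t => h (t + s) - h t) atTop (nhds 0)) :
    ∀ ε > (0:ℝ), ∀ᶠ t in atTop, ∀ u ∈ Icc (0:ℝ) 1, |h (t + u) - h t| ≤ ε := by
  intro ε hε
  by_contra hcon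
  rw [Filter.not_eventually] at hcon
  have hseq : ∀ n : ℕ, ∃ t ≥ (n:ℝ), ∃ u ∈ Icc (0:ℝ) 1, ε < |h (t + u) - h t| := by
    intro n
    rcases frequently_atTop.mp hcon n with ⟨t, ht, hP⟩
    push_neg at hP
    obtain ⟨u, hu, h1⟩ := hP
    exact ⟨t, ht, u, hu, h1⟩
  choose t ht u hu hlt using hseq
  have htt : Tendsto t atTop atTop :=
    tendsto_atTop_mono ht tendsto_natCast_atTop_atTop
  have htu : Tendsto (fun n => t n + u n) atTop atTop :=
    tendsto_atTop_mono (fun n => le_add_of_le_of_nonneg (ht n) (hu n).1) tendsto_natCast_atTop_atTop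
  set f : ℕ → ℝ → ℝ := fun n s => h (t n + s) - h (t n) with hf
  set g : ℕ → ℝ → ℝ := fun n s => h (t n + u n + s) - h (t n + u n) with hg
  have hfm : ∀ n, StronglyMeasurable (f n) := fun n =>
    ((hm.comp (measurable_const.add measurable_id)).sub measurable_const).stronglyMeasurable
  have hgm : ∀ n, StronglyMeasurable (g n) := fun n =>
    ((hm.comp (measurable_const.add measurable_id)).sub measurable_const).stronglyMeasurable
  have hfp : ∀ s : ℝ, Tendsto (fun n => f n s) atTop (nhds 0) := fun s => (hconv s).comp htt
  have hgp : ∀ s : ℝ, Tendsto (fun n => g n s) atTop (nhds 0) := fun s => (hconv s).comp htu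
  have hIcc : MeasurableSet (Icc (0:ℝ) 2) := measurableSet_Icc
  have hvol : volume (Icc (0:ℝ) 2) ≠ ⊤ := by
    rw [Real.volume_Icc]; exact ENNReal.ofReal_ne_top
  obtain ⟨tf, htfs, htfm, htfv, htfu⟩ := tendstoUniformlyOn_of_ae_tendsto hfm
    (stronglyMeasurable_const : StronglyMeasurable (fun _ : ℝ => (0:ℝ))) hIcc hvol
    (Filter.Eventually.of_forall fun x _ => hfp x) (by norm_num : (0:ℝ) < 1/4)
  obtain ⟨tg, htgs, htgm, htgv, htgu⟩ := tendstoUniformlyOn_of_ae_tendsto hgm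
    (stronglyMeasurable_const : StronglyMeasurable (fun _ : ℝ => (0:ℝ))) hIcc hvol
    (Filter.Eventually.of_forall fun x _ => hgp x) (by norm_num : (0:ℝ) < 1/4)
  set A := Icc (0:ℝ) 2 \ tf with hA
  set B := Icc (0:ℝ) 2 \ tg with hB
  have hAm : MeasurableSet A := hIcc.diff htfm
  have hBm : MeasurableSet B := hIcc.diff htgm
  have hAv : (7/4 : ℝ≥0∞) ≤ volume A := by
    have := measure_diff htfs htfm.nullMeasurableSet (ne_top_of_le_ne_top hvol (measure_mono htfs))
    rw [hA, this, Real.volume_Icc]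
    rw [show (2:ℝ) - 0 = 2 by norm_num]
    refine ENNReal.le_sub_of_add_le_left (ne_top_of_le_ne_top ENNReal.ofReal_ne_top (by assumption)) ?_
    calc volume tf + 7/4 ≤ ENNReal.ofReal (1/4) + 7/4 := add_le_add htfv le_rfl
      _ ≤ ENNReal.ofReal 2 := by
          rw [show (7/4 : ℝ≥0∞) = ENNReal.ofReal (7/4) by
            rw [ENNReal.ofReal_div_of_pos] <;> norm_num,
            ← ENNReal.ofReal_add (by norm_num) (by norm_num)]
          exact ENNReal.ofReal_le_ofReal (by norm_num)
  have hBv : (7/4 : ℝ≥0∞) ≤ volume B := by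
    have := measure_diff htgs htgm.nullMeasurableSet (ne_top_of_le_ne_top hvol (measure_mono htgs))
    rw [hB, this, Real.volume_Icc]
    rw [show (2:ℝ) - 0 = 2 by norm_num]
    refine ENNReal.le_sub_of_add_le_left (ne_top_of_le_ne_top ENNReal.ofReal_ne_top (by assumption)) ?_
    calc volume tg + 7/4 ≤ ENNReal.ofReal (1/4) + 7/4 := add_le_add htgv le_rfl
      _ ≤ ENNReal.ofReal 2 := by
          rw [show (7/4 : ℝ≥0∞) = ENNReal.ofReal (7/4) by
            rw [ENNReal.ofReal_div_of_pos] <;> norm_num,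
            ← ENNReal.ofReal_add (by norm_num) (by norm_num)]
          exact ENNReal.ofReal_le_ofReal (by norm_num)
  -- uniform smallness
  rw [Metric.tendstoUniformlyOn_iff] at htfu htgu
  obtain ⟨N₁, hN₁⟩ := eventually_atTop.mp (htfu (ε/3) (by linarith))
  obtain ⟨N₂, hN₂⟩ := eventually_atTop.mp (htgu (ε/3) (by linarith))
  set n := max N₁ N₂
  -- translated set
  set B' := (fun x => x + (- u n)) ⁻¹' B with hB'
  have hB'm : MeasurableSet B' := hBm.preimage (measurable_id.add_const _)
  have hB'v : volume B' = volume B := by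
    rw [hB']; exact measure_preimage_add_right volume _ _
  have hsub : A ∪ B' ⊆ Icc (0:ℝ) 3 := by
    rintro x (hx | hx)
    · exact ⟨hx.1.1, le_trans hx.1.2 (by norm_num)⟩
    · have hxB : x - u n ∈ Icc (0:ℝ) 2 := by
        have : x + (- u n) ∈ B := hx
        simpa [sub_eq_add_neg] using this.1
      constructor
      · linarith [hxB.1, (hu n).1]
      · linarith [hxB.2, (hu n).2]
  have hne : (A ∩ B').Nonempty := by
    by_contra hemp
    rw [not_nonempty_iff_eq_empty] at hemp
    have hdisj : Disjoint A B' := Set.disjoint_iff_inter_eq_empty.mpr hemp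
    have h1 : volume (A ∪ B') = volume A + volume B' := measure_union hdisj hB'm
    have h2 : volume (A ∪ B') ≤ volume (Icc (0:ℝ) 3) := measure_mono hsub
    rw [h1, hB', hB'v, Real.volume_Icc] at h2
    have h3 : (7/4 : ℝ≥0∞) + 7/4 ≤ ENNReal.ofReal (3 - 0) :=
      le_trans (add_le_add hAv hBv) h2
    rw [show (7/4 : ℝ≥0∞) = ENNReal.ofReal (7/4) by
        rw [ENNReal.ofReal_div_of_pos] <;> norm_num,
      ← ENNReal.ofReal_add (by norm_num) (by norm_num),
      ENNReal.ofReal_le_ofReal_iff (by norm_num)] at h3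
    linarith
  obtain ⟨s₀, hs₀A, hs₀B'⟩ := hne
  have hfb : |f n s₀| < ε/3 := by
    have := hN₁ n (le_max_left _ _) s₀ hs₀A
    rw [Real.dist_eq, abs_sub_comm] at this
    simpa using this
  have hgb : |g n (s₀ - u n)| < ε/3 := by
    have hs : s₀ - u n ∈ B := by rw [sub_eq_add_neg]; exact hs₀B'
    have := hN₂ n (le_max_right _ _) (s₀ - u n) hs
    rw [Real.dist_eq, abs_sub_comm] at this
    simpa using this
  have key : h (t n + u n) - h (t n) = f n s₀ - g n (s₀ - u n) := by
    simp only [hf, hg]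
    ring_nf
  have : |h (t n + u n) - h (t n)| < ε := by
    rw [key]
    calc |f n s₀ - g n (s₀ - u n)| ≤ |f n s₀| + |g n (s₀ - u n)| := abs_sub _ _
      _ < ε/3 + ε/3 := by gcongr
      _ ≤ ε := by linarith
  exact absurd (hlt n) (not_lt.mpr this.le)

lemma uct_div (h : ℝ → ℝ) (hm : Measurable h)
    (hconv : ∀ s : ℝ, Tendsto (fun t => h (t + s) - h t) atTop (nhds 0)) :
    Tendsto (fun t => h t / t) atTop (nhds 0) := by
  rw [NormedAddCommGroup.tendsto_nhds_zero]
  intro ε hε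
  obtain ⟨T, hT⟩ := eventually_atTop.mp (uct_aux h hm hconv (ε/2) (by linarith))
  have key : ∀ n : ℕ, ∀ u ∈ Icc (0:ℝ) 1, |h (T + n + u) - h T| ≤ (n+1) * (ε/2) := by
    intro n
    induction n with
    | zero =>
      intro u hu
      have := hT T le_rfl u hu
      push_cast
      simpa using this
    | succ n ih =>
      intro u hu
      have h1 : |h ((T + n + u) + 1) - h (T + n + u)| ≤ ε/2 := by
        have := hT (T + n + u) (by nlinarith [hu.1, (Nat.cast_nonneg n : (0:ℝ) ≤ n)]) 1
          (by norm_num)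
        simpa using this
      have h2 := ih u hu
      have heq : h (T + (n+1:ℕ) + u) - h T
          = (h ((T + n + u) + 1) - h (T + n + u)) + (h (T + n + u) - h T) := by
        push_cast
        ring_nf
      rw [heq]
      calc |(h ((T + n + u) + 1) - h (T + n + u)) + (h (T + n + u) - h T)|
          ≤ |h ((T + n + u) + 1) - h (T + n + u)| + |h (T + n + u) - h T| := abs_add_le _ _
        _ ≤ ε/2 + (n+1) * (ε/2) := add_le_add h1 h2
        _ ≤ ((n+1:ℕ)+1) * (ε/2) := by push_cast; nlinarith
  obtain ⟨C, hC⟩ : ∃ C, C = |h T| + (1 + |T|) * (ε/2) := ⟨_, rfl⟩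
  have hC0 : 0 ≤ C := by rw [hC]; positivity
  filter_upwards [eventually_ge_atTop T, eventually_ge_atTop (1:ℝ),
    eventually_gt_atTop (2*C/ε)] with t h1 h2 h3
  have ht0 : 0 < t := lt_of_lt_of_le zero_lt_one h2
  set n : ℕ := ⌊t - T⌋.toNat with hn
  have h0 : (0:ℝ) ≤ t - T := by linarith
  have hfl0 : (0:ℤ) ≤ ⌊t - T⌋ := Int.floor_nonneg.mpr h0
  have hcast : (n:ℝ) = (⌊t - T⌋ : ℝ) := by
    rw [hn]; exact_mod_cast Int.toNat_of_nonneg hfl0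
  have hnle : (n:ℝ) ≤ t - T := by rw [hcast]; exact Int.floor_le _
  have hnlt : t - T < (n:ℝ) + 1 := by rw [hcast]; exact Int.lt_floor_add_one _
  set u := t - T - n with hu'
  have huIcc : u ∈ Icc (0:ℝ) 1 := ⟨by simp [hu']; linarith, by simp [hu']; linarith⟩
  have harg : T + (n:ℝ) + u = t := by rw [hu']; ring
  have hkey : |h t - h T| ≤ ((n:ℝ)+1) * (ε/2) := by
    have := key n u huIcc
    rwa [harg] at this
  have hbound : |h t| ≤ C + (ε/2) * t := by
    have h4 : |h t| ≤ |h T| + ((n:ℝ)+1) * (ε/2) := by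
      have := abs_sub_abs_le_abs_sub (h t) (h T)
      linarith [hkey]
    have h5 : (n:ℝ) + 1 ≤ t + |T| + 1 := by
      have := neg_abs_le T
      linarith
    nlinarith [hε.le]
  have h6 : 2*C < t * ε := by
    have := (div_lt_iff₀ hε).mp h3
    linarith
  rw [Real.norm_eq_abs, abs_div, abs_of_pos ht0, div_lt_iff₀ ht0]
  calc |h t| ≤ C + ε/2 * t := hbound
    _ < ε * t := by linarith


lemma sv_bounds (L : ℝ → ℝ) (hL : SlowlyVarying L) {ε : ℝ} (hε : 0 < ε) :
    ∀ᶠ x in atTop, x ^ (-ε) ≤ L x ∧ L x ≤ x ^ ε := by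
  obtain ⟨hLm, hLpos, hLten⟩ := hL
  set h : ℝ → ℝ := fun t => Real.log (L (Real.exp t)) with hh
  have hm : Measurable h := Real.measurable_log.comp (hLm.comp Real.measurable_exp)
  have hconv : ∀ s, Tendsto (fun t => h (t+s) - h t) atTop (nhds 0) := by
    intro s
    have h1 : Tendsto (fun x => L (Real.exp s * x) / L x) atTop (nhds 1) :=
      hLten _ (Real.exp_pos s)
    have h2 : Tendsto (fun t => L (Real.exp s * Real.exp t) / L (Real.exp t)) atTop (nhds 1) :=
      h1.comp Real.tendsto_exp_atTop
    have h3 := (Real.continuousAt_log one_ne_zero).tendsto.comp h2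
    rw [Real.log_one] at h3
    refine h3.congr ?_
    intro t
    show Real.log (L (Real.exp s * Real.exp t) / L (Real.exp t)) = h (t+s) - h t
    rw [Real.log_div (ne_of_gt (hLpos _ (by positivity))) (ne_of_gt (hLpos _ (Real.exp_pos t))),
      ← Real.exp_add, add_comm s t]
  have hdiv := uct_div h hm hconv
  have hev : ∀ᶠ t in atTop, |h t / t| < ε := by
    have := Metric.tendsto_nhds.mp hdiv ε hε
    filter_upwards [this] with t ht
    rw [Real.dist_eq, sub_zero] at ht
    exact ht
  filter_upwards [Real.tendsto_log_atTop.eventually hev, eventually_ge_atTop (1:ℝ),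
    Real.tendsto_log_atTop.eventually (eventually_gt_atTop (0:ℝ))] with x hx hx1 hlogpos
  have hx0 : (0:ℝ) < x := lt_of_lt_of_le zero_lt_one hx1
  have habs : |h (Real.log x)| ≤ ε * Real.log x := by
    rw [abs_div, abs_of_pos hlogpos, div_lt_iff₀ hlogpos] at hx
    linarith
  have hLx : L x = Real.exp (h (Real.log x)) := by
    have h7 : h (Real.log x) = Real.log (L x) := by rw [hh]; simp [Real.exp_log hx0]
    rw [h7, Real.exp_log (hLpos x hx0)]
  have habs' := abs_le.mp habs
  constructor
  · rw [hLx, Real.rpow_def_of_pos hx0]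
    exact Real.exp_le_exp.mpr (by linarith [habs'.1])
  · rw [hLx, Real.rpow_def_of_pos hx0]
    exact Real.exp_le_exp.mpr (by linarith [habs'.2])

lemma setIntegral_Ioi_pos {f : ℝ → ℝ} {a : ℝ} (hf : IntegrableOn f (Ioi a) volume)
    (hpos : ∀ x ∈ Ioi a, 0 < f x) : 0 < ∫ x in Ioi a, f x := by
  rw [setIntegral_pos_iff_support_of_nonneg_ae ?_ hf]
  · have hsub : Ioi a ⊆ Function.support f ∩ Ioi a := fun x hx => ⟨ne_of_gt (hpos x hx), hx⟩
    calc (0:ℝ≥0∞) < ⊤ := by simp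
      _ = volume (Ioi a) := (Real.volume_Ioi).symm
      _ ≤ volume (Function.support f ∩ Ioi a) := measure_mono hsub
  · filter_upwards [ae_restrict_mem measurableSet_Ioi] with x hx
    exact (hpos x hx).le


/-- Case 4 of the variance lemma: if `1 < α_min < 2`,
`−2 < 2 − α_min − α_sess < −1` and `α_sess < 2`, then `c = ∫₀^∞ r(x) H̄_I(x) dx` is
finite, `V(t) ~ 2ct` as `t → ∞`, and for every `t > 0`,
`V(Tt)/(T L_V(T) L_r(T)) − 2ct/(L_V(T) L_r(T)) → 0` as `T → ∞`. Here
`V(t) = 2∫₀^t∫₀^y r(x) H̄_I(x) dx dy`. -/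
theorem variance_asymptotics_case4
    (αmin αsess μmax μW : ℝ)
    (hαmin : 1 < αmin ∧ αmin < 2)
    (hcase : -2 < 2 - αmin - αsess ∧ 2 - αmin - αsess < -1)
    (hαsess : αsess < 2)
    (hμmax : 0 < μmax) (hμW : 0 < μW)
    (σlim2 : ℝ)
    (hσlim2 : σlim2 = 2 * μmax ^ 2 / (μW ^ 3 * (αmin - 1) * (3 - αmin) * (2 - αmin)))
    (L_r L_V : ℝ → ℝ) (hLr : SlowlyVarying L_r) (hLV : SlowlyVarying L_V)
    -- the autocovariance `r` of the stationary on-off process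
    (r : ℝ → ℝ) (hr_cont : ContinuousOn r (Set.Ici 0))
    (hr : ∀ u > (0:ℝ), r u = σlim2 / 2 * (3 - αmin) * (2 - αmin) * u ^ (1 - αmin) * L_r u)
    -- the survival function `H̄` of the lifetime distribution, with finite mean
    (Hbar : ℝ → ℝ) (hHbar_meas : Measurable Hbar)
    (hHbar_nn : ∀ x, 0 ≤ Hbar x) (hHbar_le : ∀ x > (0:ℝ), Hbar x ≤ 1)
    (hHbar : ∀ x > (0:ℝ), Hbar x = x ^ (-αsess) * L_V x)
    (hHbar_int : IntegrableOn Hbar (Set.Ioi 0))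
    -- the integrated tail `H̄_I`
    (HbarI : ℝ → ℝ) (hHbarI : ∀ x, HbarI x = ∫ z in Set.Ioi x, Hbar z)
    -- the variance of the integrated process
    (V : ℝ → ℝ)
    (hV : ∀ t, V t = 2 * ∫ y in (0:ℝ)..t, ∫ x in (0:ℝ)..y, r x * HbarI x) :
    IntegrableOn (fun x => r x * HbarI x) (Set.Ioi 0) ∧
    Tendsto (fun t => V t / (2 * (∫ x in Set.Ioi (0:ℝ), r x * HbarI x) * t))
      atTop (nhds 1) ∧
    ∀ t > (0:ℝ),
      Tendsto (fun T => V (T * t) / (T * L_V T * L_r T)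
          - 2 * (∫ x in Set.Ioi (0:ℝ), r x * HbarI x) * t / (L_V T * L_r T))
        atTop (nhds 0) := by
  obtain ⟨hα1, hα2⟩ := hαmin
  obtain ⟨hc1, hc2⟩ := hcase
  have hsum : 3 < αmin + αsess := by linarith
  have hsum2 : αmin + αsess < 4 := by linarith
  obtain ⟨ε, hε_def⟩ : ∃ e : ℝ, e = (αmin + αsess - 3)/8 := ⟨_, rfl⟩
  have hε : 0 < ε := by rw [hε_def]; linarith
  have hεa : ε < αsess - 1 := by rw [hε_def]; linarith
  have hp : 2 - αmin - αsess + 2*ε < -1 := by rw [hε_def]; linarith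
  have hq1 : -1 < 2 - αmin - αsess + 2*ε + 1 := by rw [hε_def]; linarith
  have hq0 : 2 - αmin - αsess + 2*ε + 1 < 0 := by rw [hε_def]; linarith
  have hq2ε : 2 - αmin - αsess + 2*ε + 1 + 2*ε < 0 := by rw [hε_def]; linarith
  have hε18 : ε < 1/8 := by rw [hε_def]; linarith
  -- positivity of the constant in r
  have hσpos : 0 < σlim2 := by
    rw [hσlim2]
    apply div_pos (by positivity)
    exact mul_pos (mul_pos (mul_pos (pow_pos hμW 3) (by linarith)) (by linarith)) (by linarith)
  have hC₀ : 0 < σlim2 / 2 * (3 - αmin) * (2 - αmin) :=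
    mul_pos (mul_pos (by linarith) (by linarith)) (by linarith)
  have hr_pos : ∀ x > (0:ℝ), 0 < r x := fun x hx => by
    rw [hr x hx]
    exact mul_pos (mul_pos hC₀ (Real.rpow_pos_of_pos hx _)) (hLr.2.1 x hx)
  -- HbarI facts
  have hHbarI_nn : ∀ x, 0 ≤ HbarI x := fun x => by
    rw [hHbarI x]; exact setIntegral_nonneg measurableSet_Ioi fun z _ => hHbar_nn z
  have hHbar_int' : ∀ a ≥ (0:ℝ), IntegrableOn Hbar (Ioi a) := fun a ha =>
    hHbar_int.mono_set (Ioi_subset_Ioi ha)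
  have hHbarI_anti : ∀ a b : ℝ, 0 ≤ a → a ≤ b → HbarI b ≤ HbarI a := by
    intro a b ha hab
    rw [hHbarI a, hHbarI b]
    exact setIntegral_mono_set (hHbar_int' a ha)
      (Filter.Eventually.of_forall fun z => hHbar_nn z)
      ((Ioi_subset_Ioi hab).eventuallyLE)
  have hHbarI_pos : ∀ x ≥ (0:ℝ), 0 < HbarI x := by
    intro x hx
    rw [hHbarI x]
    refine setIntegral_Ioi_pos (hHbar_int' x hx) fun z hz => ?_
    have hz0 : 0 < z := lt_of_le_of_lt hx hz
    rw [hHbar z hz0]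
    exact mul_pos (Real.rpow_pos_of_pos hz0 _) (hLV.2.1 z hz0)
  -- measurability of f on Ioi 0
  have hg_meas : Measurable fun x => HbarI (max x 0) := by
    have hanti : Antitone fun x => HbarI (max x 0) := fun a b hab =>
      hHbarI_anti _ _ (le_max_right a 0) (max_le_max hab le_rfl)
    exact hanti.measurable
  have hHbarI_aesm : AEStronglyMeasurable HbarI (volume.restrict (Ioi (0:ℝ))) := by
    refine hg_meas.aestronglyMeasurable.congr ?_
    filter_upwards [ae_restrict_mem measurableSet_Ioi] with x hx
    rw [max_eq_left hx.le]
  have hr_aesm : AEStronglyMeasurable r (volume.restrict (Ioi (0:ℝ))) :=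
    (hr_cont.aestronglyMeasurable measurableSet_Ici).mono_measure
      (Measure.restrict_mono Ioi_subset_Ici_self le_rfl)
  have hf_aesm : AEStronglyMeasurable (fun x => r x * HbarI x) (volume.restrict (Ioi (0:ℝ))) :=
    hr_aesm.mul hHbarI_aesm
  -- eventual bound point A
  obtain ⟨A, hA⟩ := eventually_atTop.mp
    ((sv_bounds L_r hLr hε).and ((sv_bounds L_V hLV hε).and (eventually_ge_atTop 1)))
  have hA1 : (1:ℝ) ≤ A := (hA A le_rfl).2.2
  have hA0 : (0:ℝ) < A := by linarith
  -- pointwise bounds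
  have hHbar_bd : ∀ z, A ≤ z → Hbar z ≤ z ^ (-αsess + ε) := by
    intro z hz
    have hz0 : 0 < z := lt_of_lt_of_le hA0 hz
    rw [hHbar z hz0, Real.rpow_add hz0]
    exact mul_le_mul_of_nonneg_left (hA z hz).2.1.2 (Real.rpow_nonneg hz0.le _)
  have hd_pos : 0 < αsess - ε - 1 := by linarith
  have hHbarI_bd : ∀ x, A ≤ x → HbarI x ≤ x ^ (1 - αsess + ε) / (αsess - ε - 1) := by
    intro x hx
    have hx0 : 0 < x := lt_of_lt_of_le hA0 hx
    rw [hHbarI x]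
    have h1 : (∫ z in Ioi x, Hbar z) ≤ ∫ z in Ioi x, z ^ (-αsess + ε) :=
      setIntegral_mono_on (hHbar_int' x hx0.le)
        (integrableOn_Ioi_rpow_of_lt (by linarith) hx0) measurableSet_Ioi
        (fun z hz => hHbar_bd z (le_trans hx hz.le))
    have h2 : (∫ z in Ioi x, z ^ (-αsess + ε)) = -x ^ (-αsess + ε + 1) / (-αsess + ε + 1) :=
      integral_Ioi_rpow_of_lt (by linarith) hx0
    have h3 : -x ^ (-αsess + ε + 1) / (-αsess + ε + 1) = x ^ (1 - αsess + ε) / (αsess - ε - 1) := by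
      rw [show -αsess + ε + 1 = 1 - αsess + ε by ring]
      rw [div_eq_div_iff (by linarith) (by linarith)]
      ring
    rw [h2, h3] at h1
    exact h1
  have hf_bd : ∀ x, A ≤ x → r x * HbarI x ≤
      (σlim2 / 2 * (3 - αmin) * (2 - αmin) / (αsess - ε - 1)) * x ^ (2 - αmin - αsess + 2*ε) := by
    intro x hx
    have hx0 : 0 < x := lt_of_lt_of_le hA0 hx
    have hxp : x ^ (1 - αmin) * x ^ ε * x ^ (1 - αsess + ε) = x ^ (2 - αmin - αsess + 2*ε) := by
      rw [← Real.rpow_add hx0, ← Real.rpow_add hx0]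
      ring_nf
    have hr_bd : r x ≤ σlim2 / 2 * (3 - αmin) * (2 - αmin) * (x ^ (1 - αmin) * x ^ ε) := by
      rw [hr x hx0, mul_assoc]
      refine mul_le_mul_of_nonneg_left ?_ hC₀.le
      exact mul_le_mul_of_nonneg_left (hA x hx).1.2 (Real.rpow_nonneg hx0.le _)
    calc r x * HbarI x
        ≤ (σlim2 / 2 * (3 - αmin) * (2 - αmin) * (x ^ (1 - αmin) * x ^ ε)) *
          (x ^ (1 - αsess + ε) / (αsess - ε - 1)) := by
          apply mul_le_mul hr_bd (hHbarI_bd x hx) (hHbarI_nn x)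
          positivity
      _ = (σlim2 / 2 * (3 - αmin) * (2 - αmin) / (αsess - ε - 1)) *
          (x ^ (1 - αmin) * x ^ ε * x ^ (1 - αsess + ε)) := by ring
      _ = (σlim2 / 2 * (3 - αmin) * (2 - αmin) / (αsess - ε - 1)) *
          x ^ (2 - αmin - αsess + 2*ε) := by rw [hxp]
  have hK_pos : 0 < σlim2 / 2 * (3 - αmin) * (2 - αmin) / (αsess - ε - 1) := by positivity
  -- integrability
  have hf_nn : ∀ x ∈ Ioi (0:ℝ), 0 ≤ r x * HbarI x := fun x hx =>
    mul_nonneg (hr_pos x hx).le (hHbarI_nn x)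
  have hint_A : IntegrableOn (fun x => r x * HbarI x) (Ioi A) := by
    refine Integrable.mono'
      ((integrableOn_Ioi_rpow_of_lt hp hA0).const_mul
        (σlim2 / 2 * (3 - αmin) * (2 - αmin) / (αsess - ε - 1)))
      (hf_aesm.mono_measure (Measure.restrict_mono (Ioi_subset_Ioi hA0.le) le_rfl)) ?_
    filter_upwards [ae_restrict_mem measurableSet_Ioi] with x hx
    have hx0 : (0:ℝ) < x := lt_trans hA0 hx
    rw [Real.norm_eq_abs, abs_of_nonneg (hf_nn x hx0)]
    exact hf_bd x hx.le
  obtain ⟨Cr, hCr⟩ : ∃ Cr, ∀ x ∈ Icc (0:ℝ) A, ‖r x‖ ≤ Cr :=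
    isCompact_Icc.exists_bound_of_continuousOn (hr_cont.mono Icc_subset_Ici_self)
  have hCr0 : 0 ≤ Cr := le_trans (norm_nonneg _) (hCr 0 ⟨le_rfl, hA0.le⟩)
  have hint_0A : IntegrableOn (fun x => r x * HbarI x) (Ioc 0 A) := by
    refine ⟨hf_aesm.mono_measure (Measure.restrict_mono Ioc_subset_Ioi_self le_rfl),
      HasFiniteIntegral.restrict_of_bounded (C := Cr * HbarI 0) measure_Ioc_lt_top ?_⟩
    filter_upwards [ae_restrict_mem measurableSet_Ioc] with x hx
    rw [Real.norm_eq_abs, abs_mul]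
    refine mul_le_mul (hCr x ⟨hx.1.le, hx.2⟩ |>.trans_eq rfl |>.trans le_rfl |>.trans le_rfl
      |>.trans le_rfl) ?_ (abs_nonneg _) hCr0
    rw [abs_of_nonneg (hHbarI_nn x)]
    exact hHbarI_anti 0 x le_rfl hx.1.le
  have hf_int : IntegrableOn (fun x => r x * HbarI x) (Ioi 0) := by
    rw [← Ioc_union_Ioi_eq_Ioi hA0.le]
    exact hint_0A.union hint_A
  have hc_pos : 0 < ∫ x in Ioi (0:ℝ), r x * HbarI x :=
    setIntegral_Ioi_pos hf_int fun x hx => mul_pos (hr_pos x hx) (hHbarI_pos x hx.le)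
  obtain ⟨c, hc_def⟩ : ∃ c : ℝ, c = ∫ x in Ioi (0:ℝ), r x * HbarI x := ⟨_, rfl⟩
  have hc0 : 0 < c := hc_def ▸ hc_pos
  obtain ⟨G, hG_def⟩ : ∃ G : ℝ → ℝ, G = fun y => ∫ x in Ioi y, r x * HbarI x := ⟨_, rfl⟩
  have hG_int : ∀ y, 0 ≤ y → IntegrableOn (fun x => r x * HbarI x) (Ioi y) := fun y hy =>
    hf_int.mono_set (Ioi_subset_Ioi hy)
  have hG_nn : ∀ y, 0 ≤ y → 0 ≤ G y := by
    intro y hy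
    rw [hG_def]
    exact setIntegral_nonneg measurableSet_Ioi fun x hx => hf_nn x (lt_of_le_of_lt hy hx)
  have hG_anti : ∀ a b : ℝ, 0 ≤ a → a ≤ b → G b ≤ G a := by
    intro a b ha hab
    rw [hG_def]
    refine setIntegral_mono_set (hG_int a ha) ?_ ((Ioi_subset_Ioi hab).eventuallyLE)
    filter_upwards [ae_restrict_mem measurableSet_Ioi] with x hx
    exact hf_nn x (lt_of_le_of_lt ha hx)
  have hG_split : ∀ y, 0 ≤ y → (∫ x in (0:ℝ)..y, r x * HbarI x) = c - G y := by
    intro y hy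
    have hu : c = (∫ x in Ioc 0 y, r x * HbarI x) + G y := by
      rw [hc_def, hG_def, ← setIntegral_union (Ioc_disjoint_Ioi le_rfl) measurableSet_Ioi
        (hf_int.mono_set Ioc_subset_Ioi_self) (hG_int y hy), Ioc_union_Ioi_eq_Ioi hy]
    rw [intervalIntegral.integral_of_le hy]
    linarith
  have hF_tendsto : Tendsto (fun y => ∫ x in (0:ℝ)..y, r x * HbarI x) atTop (nhds c) := by
    rw [hc_def]
    exact intervalIntegral_tendsto_integral_Ioi 0 hf_int tendsto_id
  have hG_tendsto : Tendsto G atTop (nhds 0) := by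
    have h1 : Tendsto (fun y => c - ∫ x in (0:ℝ)..y, r x * HbarI x) atTop (nhds (c - c)) :=
      tendsto_const_nhds.sub hF_tendsto
    rw [sub_self] at h1
    refine h1.congr' ?_
    filter_upwards [eventually_ge_atTop (0:ℝ)] with y hy
    rw [hG_split y hy]
    ring
  -- bound on G
  have hG_bd : ∀ y, A ≤ y → G y ≤
      (σlim2 / 2 * (3 - αmin) * (2 - αmin) / (αsess - ε - 1)) *
        (y ^ (2 - αmin - αsess + 2*ε + 1) / (αmin + αsess - 3 - 2*ε)) := by
    intro y hy
    have hy0 : 0 < y := lt_of_lt_of_le hA0 hy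
    have h1 : G y ≤ ∫ x in Ioi y, (σlim2 / 2 * (3 - αmin) * (2 - αmin) / (αsess - ε - 1)) *
        x ^ (2 - αmin - αsess + 2*ε) := by
      rw [hG_def]
      exact setIntegral_mono_on (hG_int y hy0.le)
        ((integrableOn_Ioi_rpow_of_lt hp hy0).const_mul _) measurableSet_Ioi
        (fun x hx => hf_bd x (le_trans hy hx.le))
    have h2 : (∫ x in Ioi y, (σlim2 / 2 * (3 - αmin) * (2 - αmin) / (αsess - ε - 1)) *
        x ^ (2 - αmin - αsess + 2*ε)) = (σlim2 / 2 * (3 - αmin) * (2 - αmin) / (αsess - ε - 1)) *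
        (-y ^ (2 - αmin - αsess + 2*ε + 1) / (2 - αmin - αsess + 2*ε + 1)) := by
      rw [MeasureTheory.integral_const_mul, integral_Ioi_rpow_of_lt hp hy0]
    have h3 : -y ^ (2 - αmin - αsess + 2*ε + 1) / (2 - αmin - αsess + 2*ε + 1) =
        y ^ (2 - αmin - αsess + 2*ε + 1) / (αmin + αsess - 3 - 2*ε) := by
      rw [div_eq_div_iff (by linarith) (by linarith)]
      ring
    rw [h2, h3] at h1
    exact h1
  -- interval integrability of G
  have hG_II : ∀ a b : ℝ, 0 ≤ a → a ≤ b → IntervalIntegrable G volume a b := by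
    intro a b ha hab
    refine AntitoneOn.intervalIntegrable ?_
    rw [uIcc_of_le hab]
    intro x hx y hy hxy
    exact hG_anti x y (le_trans ha hx.1) hxy
  -- rewrite V
  have hV_eq : ∀ t, 0 ≤ t → V t = 2 * (c * t - ∫ y in (0:ℝ)..t, G y) := by
    intro t ht
    rw [hV t]
    congr 1
    calc (∫ y in (0:ℝ)..t, ∫ x in (0:ℝ)..y, r x * HbarI x) = ∫ y in (0:ℝ)..t, (c - G y) := by
          refine intervalIntegral.integral_congr fun y hy => ?_
          rw [uIcc_of_le ht] at hy
          exact hG_split y hy.1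
      _ = (∫ y in (0:ℝ)..t, c) - ∫ y in (0:ℝ)..t, G y :=
          intervalIntegral.integral_sub intervalIntegrable_const (hG_II 0 t le_rfl ht)
      _ = c * t - ∫ y in (0:ℝ)..t, G y := by
          rw [intervalIntegral.integral_const, smul_eq_mul]
          ring
  -- bounds on the primitive of G
  have hI_nn : ∀ t, 0 ≤ t → 0 ≤ ∫ y in (0:ℝ)..t, G y := fun t ht =>
    intervalIntegral.integral_nonneg ht fun y hy => hG_nn y hy.1
  have hI_bd : ∀ t, A ≤ t → (∫ y in (0:ℝ)..t, G y) ≤ G 0 * A +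
      ((σlim2 / 2 * (3 - αmin) * (2 - αmin) / (αsess - ε - 1)) / (αmin + αsess - 3 - 2*ε)) *
        (t ^ (2 - αmin - αsess + 2*ε + 1 + 1) / (2 - αmin - αsess + 2*ε + 1 + 1)) := by
    intro t ht
    have htA0 : (0:ℝ) ≤ t := le_trans hA0.le ht
    have hsplit : (∫ y in (0:ℝ)..t, G y) = (∫ y in (0:ℝ)..A, G y) + ∫ y in A..t, G y :=
      (intervalIntegral.integral_add_adjacent_intervals (hG_II 0 A le_rfl hA0.le)
        (hG_II A t hA0.le ht)).symm
    have hb1 : (∫ y in (0:ℝ)..A, G y) ≤ G 0 * A := by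
      have := intervalIntegral.integral_mono_on hA0.le (hG_II 0 A le_rfl hA0.le)
        intervalIntegrable_const (fun y hy => hG_anti 0 y le_rfl hy.1)
      rw [intervalIntegral.integral_const, smul_eq_mul] at this
      calc (∫ y in (0:ℝ)..A, G y) ≤ (A - 0) * G 0 := this
        _ = G 0 * A := by ring
    have hb2 : (∫ y in A..t, G y) ≤
        ((σlim2 / 2 * (3 - αmin) * (2 - αmin) / (αsess - ε - 1)) / (αmin + αsess - 3 - 2*ε)) *
          (t ^ (2 - αmin - αsess + 2*ε + 1 + 1) / (2 - αmin - αsess + 2*ε + 1 + 1)) := by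
      have hcont : ContinuousOn (fun y : ℝ => y ^ (2 - αmin - αsess + 2*ε + 1)) (uIcc A t) := by
        refine ContinuousOn.rpow_const continuousOn_id fun y hy => Or.inl ?_
        rw [uIcc_of_le ht] at hy
        exact ne_of_gt (lt_of_lt_of_le hA0 hy.1)
      have hII2 : IntervalIntegrable (fun y : ℝ =>
          (σlim2 / 2 * (3 - αmin) * (2 - αmin) / (αsess - ε - 1)) / (αmin + αsess - 3 - 2*ε) *
            y ^ (2 - αmin - αsess + 2*ε + 1)) volume A t :=
        (hcont.intervalIntegrable).const_mul _
      have hmono := intervalIntegral.integral_mono_on ht (hG_II A t hA0.le ht) hII2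
        (fun y hy => by
          have h4 := hG_bd y hy.1
          calc G y ≤ (σlim2 / 2 * (3 - αmin) * (2 - αmin) / (αsess - ε - 1)) *
              (y ^ (2 - αmin - αsess + 2*ε + 1) / (αmin + αsess - 3 - 2*ε)) := h4
            _ = (σlim2 / 2 * (3 - αmin) * (2 - αmin) / (αsess - ε - 1)) /
                (αmin + αsess - 3 - 2*ε) * y ^ (2 - αmin - αsess + 2*ε + 1) := by ring)
      have hval : (∫ y in A..t, (σlim2 / 2 * (3 - αmin) * (2 - αmin) / (αsess - ε - 1)) /
          (αmin + αsess - 3 - 2*ε) * y ^ (2 - αmin - αsess + 2*ε + 1)) =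
          (σlim2 / 2 * (3 - αmin) * (2 - αmin) / (αsess - ε - 1)) / (αmin + αsess - 3 - 2*ε) *
            ((t ^ (2 - αmin - αsess + 2*ε + 1 + 1) - A ^ (2 - αmin - αsess + 2*ε + 1 + 1)) /
              (2 - αmin - αsess + 2*ε + 1 + 1)) := by
        rw [intervalIntegral.integral_const_mul, integral_rpow (Or.inl hq1)]
      have hKK : 0 ≤ (σlim2 / 2 * (3 - αmin) * (2 - αmin) / (αsess - ε - 1)) /
          (αmin + αsess - 3 - 2*ε) := by
        have h5 : 0 < αmin + αsess - 3 - 2*ε := by rw [hε_def]; linarith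
        positivity
      have hfin : (σlim2 / 2 * (3 - αmin) * (2 - αmin) / (αsess - ε - 1)) /
          (αmin + αsess - 3 - 2*ε) *
            ((t ^ (2 - αmin - αsess + 2*ε + 1 + 1) - A ^ (2 - αmin - αsess + 2*ε + 1 + 1)) /
              (2 - αmin - αsess + 2*ε + 1 + 1)) ≤
          (σlim2 / 2 * (3 - αmin) * (2 - αmin) / (αsess - ε - 1)) / (αmin + αsess - 3 - 2*ε) *
            (t ^ (2 - αmin - αsess + 2*ε + 1 + 1) / (2 - αmin - αsess + 2*ε + 1 + 1)) := by
        refine mul_le_mul_of_nonneg_left ?_ hKK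
        refine div_le_div_of_nonneg_right ?_ (by linarith)
        have := Real.rpow_nonneg hA0.le (2 - αmin - αsess + 2*ε + 1 + 1)
        linarith
      calc (∫ y in A..t, G y) ≤ _ := hmono
        _ = _ := hval
        _ ≤ _ := hfin
    linarith [hb1, hb2, hsplit]
  have hKK : 0 < (σlim2 / 2 * (3 - αmin) * (2 - αmin) / (αsess - ε - 1)) /
      (αmin + αsess - 3 - 2*ε) := by
    have h5 : 0 < αmin + αsess - 3 - 2*ε := by rw [hε_def]; linarith
    positivity
  have he2 : 0 < 2 - αmin - αsess + 2*ε + 1 + 1 := by linarith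
  have hterm : ∀ a b : ℝ, b < 0 → Tendsto (fun T : ℝ => a * T ^ b) atTop (nhds 0) := by
    intro a b hb
    have := (tendsto_rpow_neg_atTop (show 0 < -b by linarith)).const_mul a
    simpa using this
  refine ⟨hf_int, ?_, ?_⟩
  · -- second claim
    rw [← hc_def]
    have hIt : Tendsto (fun t => (∫ y in (0:ℝ)..t, G y) / t) atTop (nhds 0) := by
      refine squeeze_zero' ?_ ?_ ?_
        (g := fun t => G 0 * A / t +
          ((σlim2 / 2 * (3 - αmin) * (2 - αmin) / (αsess - ε - 1)) / (αmin + αsess - 3 - 2*ε) /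
            (2 - αmin - αsess + 2*ε + 1 + 1)) * t ^ (2 - αmin - αsess + 2*ε + 1))
      · filter_upwards [eventually_ge_atTop (0:ℝ)] with t ht
        exact div_nonneg (hI_nn t ht) ht
      · filter_upwards [eventually_ge_atTop A, eventually_gt_atTop (0:ℝ)] with t htA ht0
        have h6 := hI_bd t htA
        have h7 : (∫ y in (0:ℝ)..t, G y) / t ≤ (G 0 * A +
            (σlim2 / 2 * (3 - αmin) * (2 - αmin) / (αsess - ε - 1)) / (αmin + αsess - 3 - 2*ε) *
              (t ^ (2 - αmin - αsess + 2*ε + 1 + 1) / (2 - αmin - αsess + 2*ε + 1 + 1))) / t :=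
          div_le_div_of_nonneg_right h6 ht0.le
        refine h7.trans (le_of_eq ?_)
        have h8 : t ^ (2 - αmin - αsess + 2*ε + 1 + 1) / t = t ^ (2 - αmin - αsess + 2*ε + 1) := by
          rw [show t ^ (2 - αmin - αsess + 2*ε + 1 + 1) =
              t ^ (2 - αmin - αsess + 2*ε + 1) * t ^ (1:ℝ) from Real.rpow_add ht0 _ _,
            Real.rpow_one, mul_div_cancel_right₀ _ (ne_of_gt ht0)]
        rw [add_div]
        congr 1
        rw [show (σlim2 / 2 * (3 - αmin) * (2 - αmin) / (αsess - ε - 1)) /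
              (αmin + αsess - 3 - 2*ε) *
              (t ^ (2 - αmin - αsess + 2*ε + 1 + 1) / (2 - αmin - αsess + 2*ε + 1 + 1)) / t =
            (σlim2 / 2 * (3 - αmin) * (2 - αmin) / (αsess - ε - 1)) / (αmin + αsess - 3 - 2*ε) /
              (2 - αmin - αsess + 2*ε + 1 + 1) * (t ^ (2 - αmin - αsess + 2*ε + 1 + 1) / t)
            from by ring, h8]
      · have h9 := (Filter.Tendsto.div_atTop (tendsto_const_nhds (x := G 0 * A)) tendsto_id).add
          (hterm ((σlim2 / 2 * (3 - αmin) * (2 - αmin) / (αsess - ε - 1)) /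
            (αmin + αsess - 3 - 2*ε) / (2 - αmin - αsess + 2*ε + 1 + 1))
            (2 - αmin - αsess + 2*ε + 1) hq0)
        simpa using h9
    have hfin := tendsto_const_nhds (x := (1:ℝ)) |>.sub (hIt.div_const c)
    rw [zero_div, sub_zero] at hfin
    refine hfin.congr' ?_
    filter_upwards [eventually_gt_atTop (0:ℝ)] with u hu
    rw [hV_eq u hu.le]
    field_simp
  · -- third claim
    intro t ht
    rw [← hc_def]
    have hb1 : 2*ε - 1 < 0 := by linarith
    have hBneg : Tendsto (fun T : ℝ => -(2 * (G 0 * A) * T ^ (2*ε - 1) +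
        2 * ((σlim2 / 2 * (3 - αmin) * (2 - αmin) / (αsess - ε - 1)) /
          (αmin + αsess - 3 - 2*ε) / (2 - αmin - αsess + 2*ε + 1 + 1)) *
          t ^ (2 - αmin - αsess + 2*ε + 1 + 1) * T ^ (2 - αmin - αsess + 2*ε + 1 + 2*ε)))
        atTop (nhds 0) := by
      have h9 := ((hterm (2 * (G 0 * A)) (2*ε - 1) hb1).add
        (hterm (2 * ((σlim2 / 2 * (3 - αmin) * (2 - αmin) / (αsess - ε - 1)) /
          (αmin + αsess - 3 - 2*ε) / (2 - αmin - αsess + 2*ε + 1 + 1)) *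
          t ^ (2 - αmin - αsess + 2*ε + 1 + 1))
          (2 - αmin - αsess + 2*ε + 1 + 2*ε) hq2ε)).neg
      norm_num at h9
      convert h9 using 2 with T
      ring
    have hcomb : ∀ᶠ T in atTop,
        (-(2 * (G 0 * A) * T ^ (2*ε - 1) +
          2 * ((σlim2 / 2 * (3 - αmin) * (2 - αmin) / (αsess - ε - 1)) /
            (αmin + αsess - 3 - 2*ε) / (2 - αmin - αsess + 2*ε + 1 + 1)) *
            t ^ (2 - αmin - αsess + 2*ε + 1 + 1) * T ^ (2 - αmin - αsess + 2*ε + 1 + 2*ε)) ≤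
          V (T * t) / (T * L_V T * L_r T) - 2 * c * t / (L_V T * L_r T)) ∧
        V (T * t) / (T * L_V T * L_r T) - 2 * c * t / (L_V T * L_r T) ≤ 0 := by
      filter_upwards [eventually_ge_atTop A, eventually_ge_atTop (A/t),
        eventually_gt_atTop (0:ℝ)] with T hTA hTAt hT0
      have hTt0 : 0 ≤ T * t := mul_nonneg hT0.le ht.le
      have hTtA : A ≤ T * t := by
        rw [div_le_iff₀ ht] at hTAt
        linarith
      have hLV0 : 0 < L_V T := hLV.2.1 T hT0
      have hLr0 : 0 < L_r T := hLr.2.1 T hT0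
      have hD0 : 0 < T * L_V T * L_r T := by positivity
      have hIe : 0 ≤ ∫ y in (0:ℝ)..(T*t), G y := hI_nn _ hTt0
      have hexpr : V (T * t) / (T * L_V T * L_r T) - 2 * c * t / (L_V T * L_r T) =
          -(2 * (∫ y in (0:ℝ)..(T*t), G y)) / (T * L_V T * L_r T) := by
        rw [hV_eq (T*t) hTt0]
        field_simp
        ring
      rw [hexpr]
      constructor
      · have hTpow : 0 < T ^ (1 - 2*ε) := Real.rpow_pos_of_pos hT0 _
        have hDge : T ^ (1 - 2*ε) ≤ T * L_V T * L_r T := by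
          have hbV : T ^ (-ε) ≤ L_V T := (hA T hTA).2.1.1
          have hbr : T ^ (-ε) ≤ L_r T := (hA T hTA).1.1
          have hprod : T ^ (-ε) * T ^ (-ε) ≤ L_V T * L_r T :=
            mul_le_mul hbV hbr (Real.rpow_nonneg hT0.le _) hLV0.le
          have heq : T * (T ^ (-ε) * T ^ (-ε)) = T ^ (1 - 2*ε) := by
            rw [← Real.rpow_add hT0 (-ε) (-ε),
              show T * T ^ (-ε + -ε) = T ^ (1:ℝ) * T ^ (-ε + -ε) from by rw [Real.rpow_one],
              ← Real.rpow_add hT0]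
            congr 1
            ring
          calc T ^ (1 - 2*ε) = T * (T ^ (-ε) * T ^ (-ε)) := heq.symm
            _ ≤ T * (L_V T * L_r T) := mul_le_mul_of_nonneg_left hprod hT0.le
            _ = T * L_V T * L_r T := by ring
        have e_Tt : (T*t) ^ (2 - αmin - αsess + 2*ε + 1 + 1) =
            T ^ (2 - αmin - αsess + 2*ε + 1 + 1) * t ^ (2 - αmin - αsess + 2*ε + 1 + 1) :=
          Real.mul_rpow hT0.le ht.le
        have e_a : T ^ (2 - αmin - αsess + 2*ε + 1 + 1) / T ^ (1 - 2*ε) =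
            T ^ (2 - αmin - αsess + 2*ε + 1 + 2*ε) := by
          rw [← Real.rpow_sub hT0]
          congr 1
          ring
        have e_b : (1:ℝ) / T ^ (1 - 2*ε) = T ^ (2*ε - 1) := by
          rw [one_div, ← Real.rpow_neg hT0.le]
          congr 1
          ring
        have eq_main : 2 * (G 0 * A +
            (σlim2 / 2 * (3 - αmin) * (2 - αmin) / (αsess - ε - 1)) /
              (αmin + αsess - 3 - 2*ε) *
              ((T*t) ^ (2 - αmin - αsess + 2*ε + 1 + 1) / (2 - αmin - αsess + 2*ε + 1 + 1))) /
            T ^ (1 - 2*ε) =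
            2 * (G 0 * A) * T ^ (2*ε - 1) +
            2 * ((σlim2 / 2 * (3 - αmin) * (2 - αmin) / (αsess - ε - 1)) /
              (αmin + αsess - 3 - 2*ε) / (2 - αmin - αsess + 2*ε + 1 + 1)) *
              t ^ (2 - αmin - αsess + 2*ε + 1 + 1) *
              T ^ (2 - αmin - αsess + 2*ε + 1 + 2*ε) := by
          rw [e_Tt, ← e_a, ← e_b]
          ring
        have step1 : 2 * (∫ y in (0:ℝ)..(T*t), G y) / (T * L_V T * L_r T) ≤
            2 * (∫ y in (0:ℝ)..(T*t), G y) / T ^ (1 - 2*ε) :=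
          div_le_div_of_nonneg_left (by linarith) hTpow hDge
        have step2 : 2 * (∫ y in (0:ℝ)..(T*t), G y) / T ^ (1 - 2*ε) ≤
            2 * (G 0 * A +
            (σlim2 / 2 * (3 - αmin) * (2 - αmin) / (αsess - ε - 1)) /
              (αmin + αsess - 3 - 2*ε) *
              ((T*t) ^ (2 - αmin - αsess + 2*ε + 1 + 1) / (2 - αmin - αsess + 2*ε + 1 + 1))) /
            T ^ (1 - 2*ε) :=
          div_le_div_of_nonneg_right (by linarith [hI_bd (T*t) hTtA]) hTpow.le
        rw [neg_div]
        exact neg_le_neg (step1.trans (step2.trans_eq eq_main))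
      · exact div_nonpos_of_nonpos_of_nonneg (by linarith) hD0.le
    exact tendsto_of_tendsto_of_tendsto_of_le_of_le' hBneg
      (tendsto_const_nhds (x := (0:ℝ))) (hcomb.mono fun T hT => hT.1)
      (hcomb.mono fun T hT => hT.2)
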